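/- The Lissajous curve x = 2cos(at), y = 2cos(bt + φ), with a, b coprime positive integers, a odd, and aφ ≢ 0 mod π, has exactly 2ab − a − b singular points, and all are real double points. -/

import Mathlib

open Polynomial Real

/-- The monic Chebyshev polynomials of the first kind (over ℂ). -/
noncomputable def T : ℕ → Polynomial ℂ
  | 0 => 2
  | 1 => X
  | n + 2 => X * T (n + 1) - T n


lemma T_eval_cos (θ : ℂ) : ∀ n : ℕ, (T n).eval (2 * Complex.cos θ) = 2 * Complex.cos (n * θ) := by
  have H : ∀ n : ℕ, (T n).eval (2 * Complex.cos θ) = 2 * Complex.cos (n * θ) ∧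
      (T (n+1)).eval (2 * Complex.cos θ) = 2 * Complex.cos ((n+1 : ℕ) * θ) := by
    intro n
    induction n with
    | zero => constructor <;> simp [T]
    | succ k ih =>
      refine ⟨ih.2, ?_⟩
      show (T (k+2)).eval _ = _
      rw [show T (k+2) = X * T (k+1) - T k from rfl]
      simp only [eval_sub, eval_mul, eval_X, ih.1, ih.2]
      push_cast
      rw [show ((k:ℂ)+1+1) * θ = ((k+1)*θ + θ) by ring,
        show ((k:ℂ)) * θ = ((k+1)*θ - θ) by ring, Complex.cos_add, Complex.cos_sub]
      ring
  exact fun n => (H n).1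

lemma two_eq_C : (2 : ℂ[X]) = C 2 := (map_ofNat C 2).symm

lemma T_deg_aux : ∀ n : ℕ, ((T n).degree = (n : ℕ) ∧ (1 ≤ n → (T n).Monic)) ∧
    ((T (n+1)).degree = ((n+1 : ℕ) : ℕ) ∧ (T (n+1)).Monic) := by
  intro n
  induction n with
  | zero =>
    refine ⟨⟨?_, ?_⟩, degree_X, monic_X⟩
    · show (2 : ℂ[X]).degree = _
      rw [two_eq_C, degree_C (by norm_num)]; rfl
    · omega
  | succ k ih =>
    refine ⟨ih.2.imp id fun h _ => h, ?_, ?_⟩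
    · show (X * T (k+1) - T k).degree = _
      rw [degree_sub_eq_left_of_degree_lt, degree_mul, degree_X, ih.2.1]
      · exact_mod_cast (by omega : 1 + (k + 1) = k + 1 + 1)
      · rw [degree_mul, degree_X, ih.2.1, ih.1.1]
        exact_mod_cast (by omega : k < 1 + (k + 1))
    · show (X * T (k+1) - T k).Monic
      refine Monic.sub_of_left (monic_X.mul ih.2.2) ?_
      rw [degree_mul, degree_X, ih.2.1, ih.1.1]
      exact_mod_cast (by omega : k < 1 + (k + 1))

lemma T_degree (n : ℕ) : (T n).degree = n := (T_deg_aux n).1.1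
lemma T_monic {n : ℕ} (h : 1 ≤ n) : (T n).Monic := (T_deg_aux n).1.2 h
lemma T_natDegree (n : ℕ) : (T n).natDegree = n := natDegree_eq_of_degree_eq_some (T_degree n)
lemma T_ne_zero (n : ℕ) : T n ≠ 0 := fun h => by simpa [h, T_degree] using (T_degree n).symm


lemma T_deriv_eval (n : ℕ) (θ : ℂ) :
    ((T n).derivative.eval (2 * Complex.cos θ)) * Complex.sin θ = n * Complex.sin (n * θ) := by
  have hf : HasDerivAt (fun z : ℂ => (T n).eval (2 * Complex.cos z))
      ((T n).derivative.eval (2 * Complex.cos θ) * (2 * -Complex.sin θ)) θ := by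
    have h1 := (T n).hasDerivAt (2 * Complex.cos θ)
    exact h1.comp θ ((Complex.hasDerivAt_cos θ).const_mul 2)
  have hg : HasDerivAt (fun z : ℂ => 2 * Complex.cos ((n : ℂ) * z))
      (2 * (-Complex.sin ((n:ℂ) * θ) * (n:ℂ))) θ := by
    have := (((Complex.hasDerivAt_cos ((n:ℂ)*θ)).comp θ
      ((hasDerivAt_id θ).const_mul (n:ℂ))).const_mul (2:ℂ))
    simpa using this
  have heq : (fun z : ℂ => (T n).eval (2 * Complex.cos z)) =
      fun z : ℂ => 2 * Complex.cos ((n:ℂ) * z) := funext fun z => T_eval_cos z n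
  rw [heq] at hf
  have := hf.unique hg
  linear_combination (-1/2 : ℂ) * this



-- generic: all roots are in R
lemma roots_sub (p : Polynomial ℂ) (hp : p ≠ 0) (R : Finset ℂ) (hcard : p.natDegree ≤ R.card)
    (hroots : ∀ r ∈ R, p.eval r = 0) : ∀ z, p.eval z = 0 → z ∈ R := by
  intro z hz
  have hsub : R ⊆ p.roots.toFinset := fun r hr =>
    Multiset.mem_toFinset.2 ((mem_roots hp).2 (hroots r hr))
  have hle : p.roots.toFinset.card ≤ R.card :=
    le_trans (Multiset.toFinset_card_le _) (le_trans (p.card_roots' ) hcard)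
  have : R = p.roots.toFinset := Finset.eq_of_subset_of_card_le hsub hle
  rw [this]
  exact Multiset.mem_toFinset.2 ((mem_roots hp).2 hz)


noncomputable def cR (t : ℝ) : ℂ := ((2 * Real.cos t : ℝ) : ℂ)

lemma cR_eq (t : ℝ) : cR t = 2 * Complex.cos (t : ℂ) := by
  simp [cR, Complex.ofReal_cos]

lemma cR_inj {s t : ℝ} (hs : s ∈ Set.Icc 0 π) (ht : t ∈ Set.Icc 0 π) (h : cR s = cR t) :
    s = t := by
  apply Real.injOn_cos hs ht
  simp only [cR, Complex.ofReal_inj] at h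
  linarith

lemma T_eval_cR (n : ℕ) (t : ℝ) : (T n).eval (cR t) = ((2 * Real.cos (n * t) : ℝ) : ℂ) := by
  rw [cR_eq, T_eval_cos]
  push_cast [Complex.ofReal_cos]
  norm_num

lemma cos_nat_pi (k : ℕ) : Real.cos (k * π) = (-1) ^ k := by
  simpa using Real.cos_nat_mul_pi_sub 0 k

-- critical points
lemma crit_eval (n : ℕ) (hn : 0 < n) (k : ℕ) (hk : k ∈ Finset.Ioo 0 n) :
    (T n).derivative.eval (cR (k * π / n)) = 0 := by
  rw [cR_eq]
  have h := T_deriv_eval n ((k * π / n : ℝ) : ℂ)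
  have hsin : Complex.sin ((k * π / n : ℝ) : ℂ) ≠ 0 := by
    rw [← Complex.ofReal_sin]
    simp only [ne_eq, Complex.ofReal_eq_zero]
    simp only [Finset.mem_Ioo] at hk
    have h0 : 0 < (k : ℝ) * π / n := by
      apply div_pos (mul_pos (by exact_mod_cast hk.1) Real.pi_pos) (by exact_mod_cast hn)
    have h1 : (k : ℝ) * π / n < π := by
      rw [div_lt_iff₀ (by exact_mod_cast hn)]
      have : (k : ℝ) < n := by exact_mod_cast hk.2
      nlinarith [Real.pi_pos]
    exact ne_of_gt (Real.sin_pos_of_pos_of_lt_pi h0 h1)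
  have hz : Complex.sin ((n : ℂ) * ((k * π / n : ℝ) : ℂ)) = 0 := by
    have hne : (n : ℂ) ≠ 0 := by exact_mod_cast hn.ne'
    have : (n : ℂ) * ((k * π / n : ℝ) : ℂ) = ((k * π : ℝ) : ℂ) := by
      push_cast
      field_simp
    rw [this, ← Complex.ofReal_sin]
    norm_cast
    simpa using Real.sin_int_mul_pi (k : ℤ)
  rw [hz, mul_zero] at h
  exact (mul_eq_zero.1 h).resolve_right hsin

lemma crit_T_eval (n : ℕ) (hn : 0 < n) (k : ℕ) :
    (T n).eval (cR (k * π / n)) = ((2 * (-1) ^ k : ℝ) : ℂ) := by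
  rw [T_eval_cR]
  have hne : (n : ℝ) ≠ 0 := by exact_mod_cast hn.ne'
  rw [show (n : ℝ) * (k * π / n) = k * π by field_simp, cos_nat_pi]

lemma crit_inj (n : ℕ) (hn : 0 < n) : ∀ k ∈ Finset.Ioo 0 n, ∀ l ∈ Finset.Ioo 0 n,
    cR (k * π / n) = cR (l * π / n) → k = l := by
  intro k hk l hl h
  simp only [Finset.mem_Ioo] at hk hl
  have hnr : (0:ℝ) < n := by exact_mod_cast hn
  have hmem : ∀ m : ℕ, m < n → (m : ℝ) * π / n ∈ Set.Icc 0 π := by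
    intro m hm
    constructor
    · positivity
    · rw [div_le_iff₀ hnr]
      have : (m : ℝ) ≤ n := by exact_mod_cast hm.le
      nlinarith [Real.pi_pos]
  have := cR_inj (hmem k hk.2) (hmem l hl.2) h
  have hπ := Real.pi_ne_zero
  field_simp at this
  exact_mod_cast this

lemma crit_complete (n : ℕ) (hn : 0 < n) (z : ℂ) (hz : (T n).derivative.eval z = 0) :
    ∃ k ∈ Finset.Ioo 0 n, z = cR (k * π / n) := by
  by_cases hd : (T n).derivative = 0
  ·
    exfalso
    exact absurd hd (by
      intro h
      have h1 : (T n).coeff n = 1 := by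
        have hm := T_monic (by omega : 1 ≤ n)
        rw [Monic, leadingCoeff, T_natDegree] at hm
        exact hm
      have h2 := coeff_derivative (T n) (n-1)
      rw [h, coeff_zero, show n - 1 + 1 = n by omega, h1, one_mul] at h2
      exact (Nat.cast_add_one_ne_zero (n-1)) h2.symm)
  · set R : Finset ℂ := (Finset.Ioo 0 n).image (fun k : ℕ => cR (k * π / n)) with hR
    have hcard : R.card = n - 1 := by
      rw [hR, Finset.card_image_of_injOn
        (fun x hx y hy hxy => crit_inj n hn x hx y hy hxy), Nat.card_Ioo]
      omega
    have hmem := roots_sub (T n).derivative hd R (by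
      rw [hcard]
      have := natDegree_derivative_lt (p := T n) (by rw [T_natDegree]; omega)
      rw [T_natDegree] at this
      omega) (by
      intro r hr
      simp only [hR, Finset.mem_image] at hr
      obtain ⟨k, hk, rfl⟩ := hr
      exact crit_eval n hn k hk) z hz
    simp only [hR, Finset.mem_image] at hmem
    obtain ⟨k, hk, hkz⟩ := hmem
    exact ⟨k, hk, hkz.symm⟩


lemma lvl_T_eval (n : ℕ) (hn : 0 < n) (α : ℝ) (j : ℕ) :
    (T n).eval (cR ((α + 2*π*j)/n)) = ((2 * Real.cos α : ℝ) : ℂ) := by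
  rw [T_eval_cR]
  have hne : (n : ℝ) ≠ 0 := by exact_mod_cast hn.ne'
  apply Complex.ofReal_inj.2
  rw [show (n:ℝ) * ((α + 2*π*j)/n) = α + (j : ℤ) * (2*π) by push_cast; field_simp]
  rw [Real.cos_add_int_mul_two_pi]

lemma lvl_inj (n : ℕ) (hn : 0 < n) (α : ℝ) (hα : Real.sin α ≠ 0) :
    ∀ i ∈ Finset.range n, ∀ j ∈ Finset.range n,
      cR ((α + 2*π*i)/n) = cR ((α + 2*π*j)/n) → i = j := by
  intro i hi j hj h
  simp only [Finset.mem_range] at hi hj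
  simp only [cR, Complex.ofReal_inj] at h
  have hne : (n:ℝ) ≠ 0 := by exact_mod_cast hn.ne'
  have h' : Real.cos ((α + 2*π*i)/n) = Real.cos ((α + 2*π*j)/n) := by linarith
  rw [Real.cos_eq_cos_iff] at h'
  obtain ⟨k, hk | hk⟩ := h'
  · have h2 : ((α + 2*π*(j:ℝ))/n)*n = (2*(k:ℝ)*π + (α + 2*π*(i:ℝ))/n)*n := by rw [hk]
    rw [div_mul_cancel₀ _ hne, add_mul, div_mul_cancel₀ _ hne] at h2
    have key : (j:ℝ) = i + k*n := by
      have hπ := Real.pi_pos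
      nlinarith [h2]
    have kcast : (j:ℤ) = i + k*n := by exact_mod_cast key
    have hn' : (0:ℤ) < n := by exact_mod_cast hn
    have hi' : (i:ℤ) < n := by exact_mod_cast hi
    have hj' : (j:ℤ) < n := by exact_mod_cast hj
    have hi0 : (0:ℤ) ≤ i := Int.ofNat_nonneg i
    have hj0 : (0:ℤ) ≤ j := Int.ofNat_nonneg j
    have hk0 : k = 0 := by
      rcases lt_trichotomy k 0 with hc | hc | hc
      · have h1 : k * (n:ℤ) ≤ -1 * n := mul_le_mul_of_nonneg_right (by omega) (by omega)
        linarith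
      · exact hc
      · have h1 : 1 * (n:ℤ) ≤ k * n := mul_le_mul_of_nonneg_right (by omega) (by omega)
        linarith
    rw [hk0] at kcast
    simp at kcast
    exact_mod_cast kcast.symm
  · exfalso
    have h2 : ((α + 2*π*(j:ℝ))/n)*n = (2*(k:ℝ)*π - (α + 2*π*(i:ℝ))/n)*n := by rw [hk]
    rw [div_mul_cancel₀ _ hne, sub_mul, div_mul_cancel₀ _ hne] at h2
    have : α = ((k*n - i - j : ℤ):ℝ) * π := by push_cast; nlinarith [h2]
    exact hα (by rw [this]; exact Real.sin_int_mul_pi _)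

lemma lvl_complete (n : ℕ) (hn : 0 < n) (α : ℝ) (hα : Real.sin α ≠ 0) (z : ℂ)
    (hz : (T n).eval z = ((2 * Real.cos α : ℝ) : ℂ)) :
    ∃ j ∈ Finset.range n, z = cR ((α + 2*π*j)/n) := by
  set v : ℂ := ((2 * Real.cos α : ℝ) : ℂ) with hv
  set p : Polynomial ℂ := T n - C v with hp
  have hp0 : p ≠ 0 := by
    intro h
    have heq : T n = C v := by rwa [hp, sub_eq_zero] at h
    have : ((n:ℕ) : WithBot ℕ) ≤ 0 := by
      rw [← T_degree n, heq]
      exact degree_C_le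
    have : n ≤ 0 := by exact_mod_cast this
    omega
  set R : Finset ℂ := (Finset.range n).image (fun j : ℕ => cR ((α + 2*π*j)/n)) with hR
  have hcard : R.card = n := by
    rw [hR, Finset.card_image_of_injOn
      (fun x hx y hy hxy => lvl_inj n hn α hα x hx y hy hxy), Finset.card_range]
  have hmem := roots_sub p hp0 R (by
    rw [hcard]
    calc p.natDegree ≤ max (T n).natDegree (C v).natDegree := natDegree_sub_le _ _
    _ ≤ n := by rw [T_natDegree, natDegree_C]; omega) (by
    intro r hr
    simp only [hR, Finset.mem_image] at hr
    obtain ⟨j, hj, rfl⟩ := hr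
    rw [hp]
    simp [lvl_T_eval n hn α j, hv]) z (by rw [hp]; simp [hz, hv])
  simp only [hR, Finset.mem_image] at hmem
  obtain ⟨j, hj, hjz⟩ := hmem
  exact ⟨j, hj, hjz.symm⟩


theorem lissajous_singular_points (a b : ℕ) (hapos : 0 < a) (hbpos : 0 < b)
    (hab : Nat.Coprime a b) (ha : Odd a) (φ : ℝ)
    (hφ : ∀ k : ℤ, (a : ℝ) * φ ≠ (k : ℝ) * Real.pi)
    (F : ℂ → ℂ → ℂ)
    (hF : ∀ x y : ℂ, F x y =
      ((T b).eval x) ^ 2 + ((T a).eval y) ^ 2 -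
        2 * (Real.cos ((a : ℝ) * φ) : ℂ) * ((T b).eval x) * ((T a).eval y) -
        4 * (Real.sin ((a : ℝ) * φ) : ℂ) ^ 2)
    (S : Set (ℂ × ℂ))
    (hS : S = {p : ℂ × ℂ | F p.1 p.2 = 0 ∧
      deriv (fun x => F x p.2) p.1 = 0 ∧ deriv (fun y => F p.1 y) p.2 = 0}) :
    S.ncard = 2 * a * b - a - b ∧ ∀ p ∈ S, p.1.im = 0 ∧ p.2.im = 0 := by
  set α : ℝ := (a : ℝ) * φ with hα
  set c : ℝ := Real.cos α with hc
  set s : ℝ := Real.sin α with hsdef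
  have hs : s ≠ 0 := by
    intro h
    rw [hsdef, Real.sin_eq_zero_iff] at h
    obtain ⟨m, hm⟩ := h
    exact hφ m hm.symm
  have hcs : c ^ 2 + s ^ 2 = 1 := by
    rw [hc, hsdef]; exact Real.cos_sq_add_sin_sq α
  have hcsC : (c : ℂ) ^ 2 + (s : ℂ) ^ 2 = 1 := by exact_mod_cast hcs
  have hsC : (s : ℂ) ≠ 0 := by exact_mod_cast hs
  -- sin (α + k π) ≠ 0 and cos (α + k π) = (-1)^k * c
  have hsβ : ∀ k : ℕ, Real.sin (α + k * π) ≠ 0 := by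
    intro k h
    rw [Real.sin_add, cos_nat_pi] at h
    have h0 : Real.sin ((k : ℝ) * π) = 0 := by
      exact_mod_cast Real.sin_int_mul_pi (k : ℤ)
    rw [h0, mul_zero, add_zero] at h
    rcases mul_eq_zero.1 h with h' | h'
    · exact hs h'
    · exact pow_ne_zero k (by norm_num : (-1:ℝ) ≠ 0) h'
  have hcβ : ∀ k : ℕ, Real.cos (α + k * π) = (-1) ^ k * c := by
    intro k
    rw [Real.cos_add, cos_nat_pi]
    have h0 : Real.sin ((k : ℝ) * π) = 0 := by
      exact_mod_cast Real.sin_int_mul_pi (k : ℤ)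
    rw [h0, mul_zero, sub_zero, mul_comm]
  -- derivative computations
  have hd1 : ∀ x y : ℂ, deriv (fun x' => F x' y) x =
      (derivative (T b)).eval x * (2 * (T b).eval x - 2 * (c:ℂ) * (T a).eval y) := by
    intro x y
    have hfun : (fun x' => F x' y) = fun x' =>
        ((T b)^2 - C (2*(c:ℂ)*((T a).eval y)) * (T b)
          + C (((T a).eval y)^2 - 4*(s:ℂ)^2)).eval x' := by
      funext x'
      rw [hF]
      simp only [eval_add, eval_sub, eval_mul, eval_pow, eval_C]
      ring
    rw [hfun, Polynomial.deriv]
    simp only [derivative_add, derivative_sub, derivative_mul, derivative_C, derivative_pow,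
      eval_add, eval_sub, eval_mul, eval_pow, eval_C, derivative_one, eval_zero]
    push_cast
    ring
  have hd2 : ∀ x y : ℂ, deriv (fun y' => F x y') y =
      (derivative (T a)).eval y * (2 * (T a).eval y - 2 * (c:ℂ) * (T b).eval x) := by
    intro x y
    have hfun : (fun y' => F x y') = fun y' =>
        ((T a)^2 - C (2*(c:ℂ)*((T b).eval x)) * (T a)
          + C (((T b).eval x)^2 - 4*(s:ℂ)^2)).eval y' := by
      funext y'
      rw [hF]
      simp only [eval_add, eval_sub, eval_mul, eval_pow, eval_C]
      ring
    rw [hfun, Polynomial.deriv]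
    simp only [derivative_add, derivative_sub, derivative_mul, derivative_C, derivative_pow,
      eval_add, eval_sub, eval_mul, eval_pow, eval_C, derivative_one, eval_zero]
    push_cast
    ring
  have hmem : ∀ x y : ℂ, ((x, y) ∈ S ↔
      ((T b).eval x ^ 2 + (T a).eval y ^ 2 - 2*(c:ℂ)*((T b).eval x)*((T a).eval y)
        - 4*(s:ℂ)^2 = 0 ∧
       (derivative (T b)).eval x * (2 * (T b).eval x - 2 * (c:ℂ) * (T a).eval y) = 0 ∧
       (derivative (T a)).eval y * (2 * (T a).eval y - 2 * (c:ℂ) * (T b).eval x) = 0)) := by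
    intro x y
    rw [hS]
    simp only [Set.mem_setOf_eq, hd1, hd2]
    rw [hF]
  have hT2 : ∀ (k : ℕ), ((2 * Real.cos (α + k*π) : ℝ) : ℂ) = 2 * ((-1:ℂ))^k * (c:ℂ) := by
    intro k; rw [hcβ k]; push_cast; ring
  have hε2 : ∀ k : ℕ, (((-1:ℂ))^k)^2 = 1 := by
    intro k; rw [← pow_mul, mul_comm, pow_mul]; norm_num
  set F1 : Finset (ℂ × ℂ) := ((Finset.Ioo 0 b) ×ˢ (Finset.range a)).image
    (fun kj : ℕ × ℕ => (cR (kj.1*π/b), cR ((α + kj.1*π + 2*π*kj.2)/a))) with hF1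
  set F2 : Finset (ℂ × ℂ) := ((Finset.Ioo 0 a) ×ˢ (Finset.range b)).image
    (fun lm : ℕ × ℕ => (cR ((α + lm.1*π + 2*π*lm.2)/b), cR (lm.1*π/a))) with hF2
  have hSeq : S = ↑(F1 ∪ F2) := by
    ext ⟨x, y⟩
    rw [Finset.coe_union, Set.mem_union, hmem x y]
    constructor
    · rintro ⟨h1, h2, h3⟩
      by_cases hub : (derivative (T b)).eval x = 0
      · left
        obtain ⟨k, hk, rfl⟩ := crit_complete b hbpos x hub
        have hu' : (T b).eval (cR (k*π/b)) = 2*((-1:ℂ))^k := by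
          rw [crit_T_eval b hbpos k]; push_cast; ring
        have hsq : ((T a).eval y - 2*((-1:ℂ))^k*(c:ℂ))^2 = 0 := by
          rw [hu'] at h1
          linear_combination h1 + (4*(c:ℂ)^2 - 4) * hε2 k + 4 * hcsC
        have hv : (T a).eval y = ((2 * Real.cos (α + k*π) : ℝ) : ℂ) := by
          have hz := pow_eq_zero_iff (two_ne_zero) |>.mp hsq
          rw [hT2 k]
          linear_combination hz
        obtain ⟨j, hj, rfl⟩ := lvl_complete a hapos (α + k*π) (hsβ k) y hv
        exact Finset.mem_image.2 ⟨(k, j), Finset.mem_product.2 ⟨hk, hj⟩, rfl⟩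
      · have huc : (T b).eval x = (c:ℂ) * (T a).eval y := by
          rcases mul_eq_zero.1 h2 with h | h
          · exact absurd h hub
          · linear_combination h / 2
        have hva : (derivative (T a)).eval y = 0 ∨ (T a).eval y = 0 := by
          rcases mul_eq_zero.1 h3 with h | h
          · exact Or.inl h
          · right
            have hkey : 2 * (T a).eval y * (s:ℂ)^2 = 0 := by
              rw [huc] at h
              linear_combination h + 2 * (T a).eval y * hcsC
            have hs2 : (s:ℂ)^2 ≠ 0 := pow_ne_zero 2 hsC
            rcases mul_eq_zero.1 hkey with h' | h'
            · rcases mul_eq_zero.1 h' with h'' | h''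
              · norm_num at h''
              · exact h''
            · exact absurd h' hs2
        rcases hva with hva | hv0
        · right
          obtain ⟨l, hl, rfl⟩ := crit_complete a hapos y hva
          have hv' : (T a).eval (cR (l*π/a)) = 2*((-1:ℂ))^l := by
            rw [crit_T_eval a hapos l]; push_cast; ring
          have hu : (T b).eval x = ((2 * Real.cos (α + l*π) : ℝ) : ℂ) := by
            rw [hT2 l, huc, hv']; ring
          obtain ⟨m, hm, rfl⟩ := lvl_complete b hbpos (α + l*π) (hsβ l) x hu
          exact Finset.mem_image.2 ⟨(l, m), Finset.mem_product.2 ⟨hl, hm⟩, rfl⟩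
        · exfalso
          rw [huc, hv0] at h1
          have : (s:ℂ)^2 = 0 := by linear_combination -h1/4
          exact hsC (pow_eq_zero_iff two_ne_zero |>.mp this)
    · rintro (hm1 | hm1)
      · obtain ⟨⟨k, j⟩, hkj, heq⟩ := Finset.mem_image.1 hm1
        obtain ⟨hk, hj⟩ := Finset.mem_product.1 hkj
        obtain ⟨hx, hy⟩ : cR (k*π/b) = x ∧ cR ((α + k*π + 2*π*j)/a) = y := by
          constructor
          · exact congrArg Prod.fst heq
          · exact congrArg Prod.snd heq
        subst hx; subst hy
        have hu' : (T b).eval (cR (k*π/b)) = 2*((-1:ℂ))^k := by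
          rw [crit_T_eval b hbpos k]; push_cast; ring
        have hv' : (T a).eval (cR ((α + k*π + 2*π*j)/a)) = 2*((-1:ℂ))^k*(c:ℂ) := by
          rw [lvl_T_eval a hapos (α + k*π) j, hT2 k]
        refine ⟨?_, ?_, ?_⟩
        · rw [hu', hv']
          linear_combination (4 - 4*(c:ℂ)^2) * hε2 k + (-4) * hcsC
        · rw [crit_eval b hbpos k hk, zero_mul]
        · rw [hu', hv']; ring
      · obtain ⟨⟨l, m⟩, hlm, heq⟩ := Finset.mem_image.1 hm1
        obtain ⟨hl, hm⟩ := Finset.mem_product.1 hlm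
        obtain ⟨hx, hy⟩ : cR ((α + l*π + 2*π*m)/b) = x ∧ cR (l*π/a) = y := by
          exact ⟨congrArg Prod.fst heq, congrArg Prod.snd heq⟩
        subst hx; subst hy
        have hv' : (T a).eval (cR (l*π/a)) = 2*((-1:ℂ))^l := by
          rw [crit_T_eval a hapos l]; push_cast; ring
        have hu' : (T b).eval (cR ((α + l*π + 2*π*m)/b)) = 2*((-1:ℂ))^l*(c:ℂ) := by
          rw [lvl_T_eval b hbpos (α + l*π) m, hT2 l]
        refine ⟨?_, ?_, ?_⟩
        · rw [hu', hv']
          linear_combination (4 - 4*(c:ℂ)^2) * hε2 l + (-4) * hcsC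
        · rw [hu', hv']; ring
        · rw [crit_eval a hapos l hl, zero_mul]
  have hdisj : Disjoint F1 F2 := by
    rw [Finset.disjoint_left]
    rintro ⟨x, y⟩ h1 h2
    obtain ⟨⟨k, j⟩, hkj, heq1⟩ := Finset.mem_image.1 h1
    obtain ⟨⟨l, m⟩, hlm, heq2⟩ := Finset.mem_image.1 h2
    have hy1 : cR ((α + k*π + 2*π*j)/a) = y := congrArg Prod.snd heq1
    have hy2 : cR (l*π/a) = y := congrArg Prod.snd heq2
    have e1 : (T a).eval y = 2*((-1:ℂ))^k*(c:ℂ) := by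
      rw [← hy1, lvl_T_eval a hapos (α + k*π) j, hT2 k]
    have e2 : (T a).eval y = 2*((-1:ℂ))^l := by
      rw [← hy2, crit_T_eval a hapos l]; push_cast; ring
    have h := e1.symm.trans e2
    have hc2 : (c:ℂ)^2 = 1 := by
      linear_combination (1/4) * (2*((-1:ℂ))^k*(c:ℂ) + 2*((-1:ℂ))^l) * h
        - (c:ℂ)^2 * hε2 k + hε2 l
    have : (s:ℂ)^2 = 0 := by linear_combination hcsC - hc2
    exact hsC (pow_eq_zero_iff two_ne_zero |>.mp this)
  have hcard1 : F1.card = (b-1)*a := by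
    rw [hF1, Finset.card_image_of_injOn ?inj, Finset.card_product, Nat.card_Ioo,
      Finset.card_range]
    · simp
    case inj =>
      rintro ⟨k, j⟩ hkj ⟨k', j'⟩ hkj' heq
      simp only [Finset.coe_product, Set.mem_prod, Finset.mem_coe] at hkj hkj'
      have hkk : k = k' := crit_inj b hbpos k hkj.1 k' hkj'.1 (congrArg Prod.fst heq)
      subst hkk
      have := lvl_inj a hapos (α + k*π) (hsβ k) j hkj.2 j' hkj'.2 (congrArg Prod.snd heq)
      exact Prod.ext rfl this
  have hcard2 : F2.card = (a-1)*b := by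
    rw [hF2, Finset.card_image_of_injOn ?inj, Finset.card_product, Nat.card_Ioo,
      Finset.card_range]
    · simp
    case inj =>
      rintro ⟨l, m⟩ hlm ⟨l', m'⟩ hlm' heq
      simp only [Finset.coe_product, Set.mem_prod, Finset.mem_coe] at hlm hlm'
      have hll : l = l' := crit_inj a hapos l hlm.1 l' hlm'.1 (congrArg Prod.snd heq)
      subst hll
      have := lvl_inj b hbpos (α + l*π) (hsβ l) m hlm.2 m' hlm'.2 (congrArg Prod.fst heq)
      exact Prod.ext rfl this
  constructor
  · rw [hSeq, Set.ncard_coe_finset, Finset.card_union_of_disjoint hdisj, hcard1, hcard2]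
    obtain ⟨a', rfl⟩ : ∃ a', a = a' + 1 := ⟨a - 1, by omega⟩
    obtain ⟨b', rfl⟩ : ∃ b', b = b' + 1 := ⟨b - 1, by omega⟩
    simp only [Nat.add_sub_cancel]
    rw [show 2*(a'+1)*(b'+1) = (b'*(a'+1) + a'*(b'+1) + (b'+1)) + (a'+1) from by ring,
      Nat.add_sub_cancel, Nat.add_sub_cancel]
  · intro p hp
    rw [hSeq] at hp
    rw [Finset.coe_union, Set.mem_union] at hp
    rcases hp with hp | hp <;>
    · obtain ⟨⟨k, j⟩, hkj, heq⟩ := Finset.mem_image.1 hp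
      rw [← heq]
      exact ⟨Complex.ofReal_im _, Complex.ofReal_im _⟩
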